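/- The kernel of the reduction map SL₂(ℤ_p) → SL₂(ℤ/p) is a pro-p group for p prime. -/
import Mathlib

open Matrix Finset

namespace ProP
variable {p : ℕ} [Fact p.Prime]

local notation "M" => Matrix (Fin 2) (Fin 2) ℤ_[p]

def D (n : ℕ) (A : M) : Prop := ∀ i j, (p : ℤ_[p]) ^ n ∣ A i j

lemma D_zero (A : M) : D 0 A := fun i j => by simp

lemma D_mono {a b : ℕ} (h : a ≤ b) {A : M} (hA : D b A) : D a A :=
  fun i j => dvd_trans (pow_dvd_pow _ h) (hA i j)

lemma D_add {n : ℕ} {A B : M} (hA : D n A) (hB : D n B) : D n (A + B) :=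
  fun i j => by simpa using dvd_add (hA i j) (hB i j)

lemma D_mul {a b : ℕ} {A B : M} (hA : D a A) (hB : D b B) : D (a + b) (A * B) := by
  intro i j
  rw [Matrix.mul_apply]
  refine Finset.dvd_sum fun k _ => ?_
  rw [pow_add]
  exact mul_dvd_mul (hA i k) (hB k j)

/-- Key step: if `h ≡ 1 mod p^(n+1)` then `h^p ≡ 1 mod p^(n+2)`. -/
lemma D_pow_p {n : ℕ} {h : M} (hh : D (n + 1) (h - 1)) : D (n + 2) (h ^ p - 1) := by
  set x : M := h - 1 with hx
  have hh1 : h = x + 1 := by rw [hx]; abel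
  have expand : h ^ p = ∑ m ∈ Finset.range (p + 1), x ^ m * (1 : M) ^ (p - m) * (p.choose m : M) := by
    rw [hh1]
    exact (Commute.one_right x).add_pow p
  have expand2 : h ^ p - 1 = ∑ m ∈ Finset.range p, x ^ (m + 1) * (p.choose (m + 1) : M) := by
    rw [expand, Finset.sum_range_succ']
    simp only [pow_zero, one_pow, mul_one, one_mul, Nat.choose_zero_right, Nat.cast_one,
      add_sub_cancel_right]
  rw [expand2]
  intro i j
  rw [Matrix.sum_apply]
  refine Finset.dvd_sum fun m _ => ?_
  have hcast : ∀ (c : ℕ) (B : M), B * (c : M) = c • B := fun c B => by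
    rw [← (Nat.cast_commute (c : ℕ) B).eq, ← nsmul_eq_mul]
  rw [hcast, Matrix.smul_apply, nsmul_eq_mul]
  rcases Nat.eq_zero_or_pos m with hm | hm
  · subst hm
    simp only [Nat.zero_add, pow_one, Nat.choose_one_right]
    have : (p : ℤ_[p]) ^ (n + 2) = p * p ^ (n + 1) := by ring
    rw [this]
    exact mul_dvd_mul (by exact_mod_cast dvd_rfl) (hh i j)
  · refine Dvd.dvd.mul_left ?_ _
    have hsplit : x ^ (m + 1) = x ^ (m - 1) * x * x := by
      rw [← pow_succ, ← pow_succ]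
      congr 1
      omega
    have hD : D (n + 2) (x ^ (m + 1)) := by
      rw [hsplit]
      refine D_mono ?_ (by simpa using D_mul (D_mul (D_zero (x ^ (m - 1))) hh) hh)
      omega
    exact hD i j

/-- If `h ≡ 1 mod p^n` then `h^t ≡ 1 mod p^n`. -/
lemma D_pow_t {n : ℕ} {h : M} (hh : D n (h - 1)) : ∀ t : ℕ, D n (h ^ t - 1)
  | 0 => by intro i j; simp
  | (t + 1) => by
      have hrw : h ^ (t + 1) - 1 = h ^ t * (h - 1) + (h ^ t - 1) := by
        rw [pow_succ, mul_sub, mul_one]; abel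
      rw [hrw]
      exact D_add (by simpa using D_mul (D_zero (h ^ t)) hh) (D_pow_t hh t)

/-- If `g ≡ 1 mod p` then `g^(p^n) ≡ 1 mod p^(n+1)`. -/
lemma D_pow_pn {g : M} (hg : D 1 (g - 1)) : ∀ n : ℕ, D (n + 1) (g ^ (p ^ n) - 1)
  | 0 => by simpa using hg
  | (n + 1) => by
      have := D_pow_p (D_pow_pn hg n)
      rwa [← pow_mul, ← pow_succ] at this

/-- If `a ≡ b mod p^n` then `g^a ≡ g^b mod p^(n+1)`. -/
lemma D_cong_pow {g : M} (hg : D 1 (g - 1)) {n : ℕ} {a b : ℕ} (hab : ((p : ℤ) ^ n) ∣ (a : ℤ) - b)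
    (hba : b ≤ a) : D (n + 1) (g ^ a - g ^ b) := by
  obtain ⟨t, ht⟩ : p ^ n ∣ a - b := by
    have : ((p : ℤ) ^ n) ∣ ((a - b : ℕ) : ℤ) := by
      rwa [Int.ofNat_sub hba]
    exact_mod_cast Int.ofNat_dvd.mp (by exact_mod_cast this)
  have hrw : g ^ a - g ^ b = g ^ b * (g ^ (a - b) - 1) := by
    rw [mul_sub, mul_one, ← pow_add]
    congr 2
    omega
  rw [hrw, ht, pow_mul]
  simpa using D_mul (D_zero (g ^ b)) (D_pow_t (D_pow_pn hg n) t)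

lemma D_symm {n : ℕ} {A B : M} (h : D n (A - B)) : D n (B - A) := by
  intro i j
  have := h i j
  simp only [Matrix.sub_apply] at this ⊢
  rw [← dvd_neg] at this
  simpa using this

/-- `a ≡ b mod p^n` implies `g^a ≡ g^b mod p^(n+1)`, no order assumption. -/
lemma D_cong_pow' {g : M} (hg : D 1 (g - 1)) {n : ℕ} {a b : ℕ}
    (hab : ((p : ℤ) ^ n) ∣ (a : ℤ) - b) : D (n + 1) (g ^ a - g ^ b) := by
  rcases le_total b a with h | h
  · exact D_cong_pow hg hab h
  · exact D_symm (D_cong_pow hg (by simpa using (dvd_neg.mpr hab)) h)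

lemma hnorm {N : ℕ} {A : M} (hA : D N A) (i j : Fin 2) : ‖A i j‖ ≤ (p : ℝ) ^ (-(N : ℤ)) := by
  rw [PadicInt.norm_le_pow_iff_mem_span_pow, Ideal.mem_span_singleton]
  exact hA i j

open Filter Topology PadicInt

theorem exists_root (q : ℕ) (hq : ¬ p ∣ q)
    (g : (Matrix.SpecialLinearGroup.map (n := Fin 2) (PadicInt.toZMod (p := p))).ker) :
    ∃ h, h ^ q = g := by
  classical
  have hp1 : (1 : ℝ) < p := by exact_mod_cast (Fact.out : p.Prime).one_lt
  have hp0 : (0 : ℝ) < p := lt_trans one_pos hp1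
  -- entries of elements of Γ reduce to the identity
  have hmem : ∀ x : (Matrix.SpecialLinearGroup.map (n := Fin 2) (PadicInt.toZMod (p := p))).ker, ∀ i j, PadicInt.toZMod
      (((x : Matrix.SpecialLinearGroup (Fin 2) ℤ_[p]) : M) i j)
        = (1 : Matrix (Fin 2) (Fin 2) (ZMod p)) i j := by
    intro x i j
    have hx := x.2
    rw [MonoidHom.mem_ker] at hx
    have h1 := congrArg
      (fun A : Matrix.SpecialLinearGroup (Fin 2) (ZMod p) => (A : Matrix (Fin 2) (Fin 2) (ZMod p)) i j) hx
    simpa using h1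
  have hdvd_iff : ∀ y z : ℤ_[p], PadicInt.toZMod y = PadicInt.toZMod z ↔ (p : ℤ_[p]) ∣ y - z := by
    intro y z
    rw [← sub_eq_zero, ← map_sub, ← RingHom.mem_ker, PadicInt.ker_toZMod,
      PadicInt.maximalIdeal_eq_span_p, Ideal.mem_span_singleton]
  set gs : Matrix.SpecialLinearGroup (Fin 2) ℤ_[p] := ↑g with hgs
  set gm : M := ↑gs with hgm
  have hg1 : D 1 (gm - 1) := by
    intro i j
    have h1 : PadicInt.toZMod ((1 : M) i j) = (1 : Matrix (Fin 2) (Fin 2) (ZMod p)) i j := by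
      by_cases hij : i = j <;> simp [Matrix.one_apply, hij]
    have := (hdvd_iff (gm i j) ((1 : M) i j)).mp ((hmem g i j).trans h1.symm)
    simpa [Matrix.sub_apply] using this
  -- inverse of q in ℤ_[p]
  have hqu : IsUnit (q : ℤ_[p]) := by
    rw [PadicInt.isUnit_iff]
    refine le_antisymm (PadicInt.norm_le_one _) (not_lt.mp ?_)
    have h1 : ¬ ‖((q : ℤ) : ℤ_[p])‖ < 1 := by
      rw [PadicInt.norm_int_lt_one_iff_dvd]
      exact_mod_cast hq
    simpa using h1
  obtain ⟨u, hu⟩ := hqu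
  set b : ℤ_[p] := ↑u⁻¹ with hbdef
  have hb : (q : ℤ_[p]) * b = 1 := by rw [← hu, hbdef, ← Units.val_mul, mul_inv_cancel, Units.val_one]
  -- the approximating sequence
  set s : ℕ → M := fun n => ↑(gs ^ b.appr n) with hsdef
  have hs_pow : ∀ n, s n = gm ^ b.appr n := fun n => Matrix.SpecialLinearGroup.coe_pow _ _
  -- appr congruences
  have happr : ∀ N n, N ≤ n → (p : ℤ_[p]) ^ N ∣ b - (b.appr n : ℤ_[p]) := by
    intro N n hNn
    have h2 := PadicInt.appr_spec n b
    rw [Ideal.mem_span_singleton] at h2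
    exact dvd_trans (pow_dvd_pow _ hNn) h2
  have happr2 : ∀ N n m, N ≤ n → N ≤ m → ((p : ℤ) ^ N) ∣ (b.appr n : ℤ) - (b.appr m : ℤ) := by
    intro N n m hn hm
    have h1 := happr N n hn
    have h2 := happr N m hm
    have h3 : (p : ℤ_[p]) ^ N ∣ ((b.appr n : ℤ) - (b.appr m : ℤ) : ℤ) := by
      push_cast
      have := dvd_sub h2 h1
      simpa [sub_sub_sub_cancel_left] using this
    rwa [PadicInt.pow_p_dvd_int_iff] at h3
  -- Cauchy
  have hDnm : ∀ N n m, N ≤ n → N ≤ m → D (N + 1) (s n - s m) := by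
    intro N n m hn hm
    rw [hs_pow, hs_pow]
    exact D_cong_pow' hg1 (happr2 N n m hn hm)
  have hzpow_le : ∀ N : ℕ, (p : ℝ) ^ (-(N + 1 : ℕ) : ℤ) ≤ ((p : ℝ)⁻¹) ^ N := by
    intro N
    rw [_root_.zpow_neg, zpow_natCast, ← inv_pow]
    exact pow_le_pow_of_le_one (by positivity) (inv_le_one_of_one_le₀ (le_of_lt hp1)) (by omega)
  have hcauchy : ∀ i j, ∃ L, Tendsto (fun n => s n i j) atTop (𝓝 L) := by
    intro i j
    refine cauchySeq_tendsto_of_complete (cauchySeq_of_le_tendsto_0 (fun N => ((p : ℝ)⁻¹) ^ N) ?_ ?_)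
    · intro n m N hn hm
      rw [dist_eq_norm]
      calc ‖s n i j - s m i j‖ ≤ (p : ℝ) ^ (-(N + 1 : ℕ) : ℤ) := by
            simpa [Matrix.sub_apply] using hnorm (hDnm N n m hn hm) i j
        _ ≤ ((p : ℝ)⁻¹) ^ N := hzpow_le N
    · exact tendsto_pow_atTop_nhds_zero_of_lt_one (by positivity) (inv_lt_one_of_one_lt₀ hp1)
  choose L hL using hcauchy
  set H : M := Matrix.of L with hHdef
  have hLH : ∀ i j, Tendsto (fun n => s n i j) atTop (𝓝 (H i j)) := hL
  -- entrywise limits pass through products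
  have ETmul : ∀ (A B : ℕ → M) (A' B' : M),
      (∀ i j, Tendsto (fun n => A n i j) atTop (𝓝 (A' i j))) →
      (∀ i j, Tendsto (fun n => B n i j) atTop (𝓝 (B' i j))) →
      ∀ i j, Tendsto (fun n => (A n * B n) i j) atTop (𝓝 ((A' * B') i j)) := by
    intro A B A' B' hA hB i j
    simp only [Matrix.mul_apply]
    exact tendsto_finset_sum _ fun k _ => (hA i k).mul (hB k j)
  have ETpow : ∀ t : ℕ, ∀ i j, Tendsto (fun n => (s n ^ t) i j) atTop (𝓝 ((H ^ t) i j)) := by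
    intro t
    induction t with
    | zero => intro i j; simpa using tendsto_const_nhds
    | succ t ih =>
        intro i j
        have := ETmul (fun n => s n ^ t) s (H ^ t) H ih hLH i j
        simpa [pow_succ] using this
  -- s n ^ q tends to gm
  have hq_cong : ∀ n : ℕ, ((p : ℤ) ^ n) ∣ ((b.appr n * q : ℕ) : ℤ) - (1 : ℕ) := by
    intro n
    have h1 : (p : ℤ_[p]) ^ n ∣ (((b.appr n * q : ℕ) : ℤ) - (1 : ℕ) : ℤ) := by
      push_cast
      have key : ((b.appr n : ℤ_[p]) * q - 1) = q * ((b.appr n : ℤ_[p]) - b) := by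
        rw [mul_sub, ← hb]; ring
      calc (p : ℤ_[p]) ^ n ∣ (q : ℤ_[p]) * ((b.appr n : ℤ_[p]) - b) :=
            Dvd.dvd.mul_left (by simpa using (dvd_neg.mpr (happr n n le_rfl))) _
        _ = (b.appr n : ℤ_[p]) * q - 1 := key.symm
    rwa [PadicInt.pow_p_dvd_int_iff] at h1
  have hsq_tendsto : ∀ i j, Tendsto (fun n => (s n ^ q) i j) atTop (𝓝 (gm i j)) := by
    intro i j
    rw [tendsto_iff_dist_tendsto_zero]
    refine squeeze_zero (fun n => dist_nonneg) (fun n => ?_) (tendsto_pow_atTop_nhds_zero_of_lt_one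
      (by positivity) (inv_lt_one_of_one_lt₀ hp1))
    have hD : D (n + 1) (s n ^ q - gm) := by
      have h1 : s n ^ q = gm ^ (b.appr n * q) := by rw [hs_pow, ← pow_mul]
      have h2 : gm = gm ^ (1 : ℕ) := (pow_one gm).symm
      rw [h1]
      nth_rewrite 2 [h2]
      exact D_cong_pow' hg1 (hq_cong n)
    rw [dist_eq_norm]
    calc ‖(s n ^ q) i j - gm i j‖ ≤ (p : ℝ) ^ (-(n + 1 : ℕ) : ℤ) := by
          simpa [Matrix.sub_apply] using hnorm hD i j
      _ ≤ ((p : ℝ)⁻¹) ^ n := hzpow_le n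
  have hHq : H ^ q = gm := by
    ext i j
    exact tendsto_nhds_unique (ETpow q i j) (hsq_tendsto i j)
  -- determinant
  have hdet : H.det = 1 := by
    have h1 : Tendsto (fun n => (s n).det) atTop (𝓝 H.det) := by
      simp only [Matrix.det_fin_two]
      exact ((hLH 0 0).mul (hLH 1 1)).sub ((hLH 0 1).mul (hLH 1 0))
    have h2 : (fun n => (s n).det) = fun _ => (1 : ℤ_[p]) := by
      funext n
      exact (gs ^ b.appr n).2
    rw [h2] at h1
    exact (tendsto_nhds_unique tendsto_const_nhds h1).symm
  -- reduction mod p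
  have hred : ∀ i j, PadicInt.toZMod (H i j) = (1 : Matrix (Fin 2) (Fin 2) (ZMod p)) i j := by
    intro i j
    have hb0 : ∀ n, ‖s n i j - s 0 i j‖ ≤ (p : ℝ) ^ (-(1 : ℕ) : ℤ) := by
      intro n
      have hD : D 1 (s n - s 0) := by
        have := hDnm 0 n 0 (Nat.zero_le n) le_rfl
        simpa using this
      simpa [Matrix.sub_apply] using hnorm hD i j
    have h1 : Tendsto (fun n => ‖s n i j - s 0 i j‖) atTop (𝓝 ‖H i j - s 0 i j‖) :=
      ((hLH i j).sub tendsto_const_nhds).norm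
    have h2 : ‖H i j - s 0 i j‖ ≤ (p : ℝ) ^ (-(1 : ℕ) : ℤ) :=
      le_of_tendsto h1 (Filter.Eventually.of_forall hb0)
    have h3 : (p : ℤ_[p]) ∣ H i j - s 0 i j := by
      have := (PadicInt.norm_le_pow_iff_mem_span_pow _ 1).mp (by exact_mod_cast h2)
      rwa [pow_one, Ideal.mem_span_singleton] at this
    have h4 : PadicInt.toZMod (H i j) = PadicInt.toZMod (s 0 i j) := (hdvd_iff _ _).mpr h3
    rw [h4]
    have h5 : s 0 = ((g ^ b.appr 0 :
        (Matrix.SpecialLinearGroup.map (n := Fin 2) (PadicInt.toZMod (p := p))).ker) :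
        Matrix.SpecialLinearGroup (Fin 2) ℤ_[p]) := by
      rw [hsdef]
      norm_cast
    rw [h5]
    exact hmem (g ^ b.appr 0) i j
  -- assemble
  set Hs : Matrix.SpecialLinearGroup (Fin 2) ℤ_[p] := ⟨H, hdet⟩ with hHs
  have hker : Hs ∈ (Matrix.SpecialLinearGroup.map (n := Fin 2) (PadicInt.toZMod (p := p))).ker := by
    rw [MonoidHom.mem_ker]
    apply Subtype.ext
    ext i j
    simpa using hred i j
  refine ⟨⟨Hs, hker⟩, ?_⟩
  apply Subtype.ext
  apply Subtype.ext
  rw [SubmonoidClass.coe_pow, Matrix.SpecialLinearGroup.coe_pow]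
  exact hHq

end ProP

/-- The kernel `Γ` of the reduction map `SL₂(ℤ_p) → SL₂(ℤ/p)` is a pro-`p`
group: every finite quotient of `Γ` is a `p`-group. -/
theorem stmt_9 (p : ℕ) [Fact p.Prime] :
    ∀ N : Subgroup
        ((Matrix.SpecialLinearGroup.map (n := Fin 2) (PadicInt.toZMod (p := p))).ker),
      (hN : N.Normal) → N.FiniteIndex →
        haveI := hN
        IsPGroup p
          ((Matrix.SpecialLinearGroup.map (n := Fin 2) (PadicInt.toZMod (p := p))).ker ⧸ N) := by
  intro N hN hFI
  haveI := hN
  haveI := hFI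
  rw [IsPGroup.iff_card]
  have hcard0 : Nat.card
      ((Matrix.SpecialLinearGroup.map (n := Fin 2) (PadicInt.toZMod (p := p))).ker ⧸ N) ≠ 0 :=
    Nat.card_pos.ne'
  have hkey : ∀ {r : ℕ}, r.Prime → r ∣ Nat.card
      ((Matrix.SpecialLinearGroup.map (n := Fin 2) (PadicInt.toZMod (p := p))).ker ⧸ N) →
      r = p := by
    intro r hr hdvd
    by_contra hne
    haveI : Fact r.Prime := ⟨hr⟩
    obtain ⟨x, hx⟩ := exists_prime_orderOf_dvd_card' r hdvd
    have hpr : ¬ p ∣ r := fun h => hne ((Nat.prime_dvd_prime_iff_eq Fact.out hr).mp h).symm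
    have hsurj : Function.Surjective
        (fun y : (Matrix.SpecialLinearGroup.map (n := Fin 2)
          (PadicInt.toZMod (p := p))).ker ⧸ N => y ^ r) := by
      intro y
      obtain ⟨z, rfl⟩ := QuotientGroup.mk'_surjective N y
      obtain ⟨w, hw⟩ := ProP.exists_root r hpr z
      exact ⟨QuotientGroup.mk' N w, by simp only [← map_pow, hw]⟩
    have hinj := Finite.injective_iff_surjective.mpr hsurj
    have hx1 : x = 1 := hinj (by
      show x ^ r = 1 ^ r
      rw [← hx, pow_orderOf_eq_one, one_pow])
    rw [hx1, orderOf_one] at hx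
    exact hr.one_lt.ne' hx.symm
  exact ⟨_, Nat.eq_prime_pow_of_unique_prime_dvd hcard0 fun hd hdvd => hkey hd hdvd⟩
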